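/- Let f : ℝ^d → ℝ be C^4 near 0 with f(0) = 0, ∇f(0) = 0, and suppose there exist m₀ > 0 and ρ₀ > 0 with f(x) ≥ m₀‖x‖⁴ for all ‖x‖ ≤ ρ₀. Then for every u in the null space of the Hessian H = ∇²f(0), the third derivative satisfies ∇³f(0)[u,u,u] = 0. -/

import Mathlib

open Set InnerProductSpace
open scoped Gradient



variable {𝕜 : Type*} [NontriviallyNormedField 𝕜] {E : Type*} [NormedAddCommGroup E]
  [NormedSpace 𝕜 E] {F : Type*} [NormedAddCommGroup F] [NormedSpace 𝕜 F]

theorem myCongrSeries {n : WithTop ℕ∞} {f : E → F} {s : Set E}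
    {p q : E → FormalMultilinearSeries 𝕜 E F}
    (h : HasFTaylorSeriesUpToOn n f p s) (hpq : ∀ x ∈ s, q x = p x) :
    HasFTaylorSeriesUpToOn n f q s := by
  constructor
  · intro x hx; rw [hpq x hx]; exact h.zero_eq x hx
  · intro m hm x hx
    rw [hpq x hx]
    exact (h.fderivWithin m hm x hx).congr (fun y hy => by rw [hpq y hy]) (by rw [hpq x hx])
  · intro m hm
    exact (h.cont m hm).congr fun y hy => by rw [hpq y hy]

theorem myTaylorOpen {n : WithTop ℕ∞} {f : E → F} {U : Set E} (hU : IsOpen U)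
    (hf : ContDiffOn 𝕜 n f U) :
    HasFTaylorSeriesUpToOn n f (ftaylorSeries 𝕜 f) U := by
  refine myCongrSeries (hf.ftaylorSeriesWithin hU.uniqueDiffOn) fun x hx => ?_
  funext k
  show iteratedFDeriv 𝕜 k f x = iteratedFDerivWithin 𝕜 k f U x
  exact (iteratedFDerivWithin_of_isOpen k hU hx).symm

theorem myIccEq {n : ℕ} {g : ℝ → ℝ} {U : Set ℝ} (hU : IsOpen U)
    (hg : ContDiffOn ℝ n g U) {a b x : ℝ} (hab : a < b) (hIcc : Icc a b ⊆ U)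
    (hx : x ∈ Icc a b) {k : ℕ} (hk : (k : ℕ∞) ≤ n) :
    iteratedDerivWithin k g (Icc a b) x = iteratedDeriv k g x := by
  have h := ((myTaylorOpen hU hg).mono hIcc).eq_iteratedFDerivWithin_of_uniqueDiffOn
    (by exact_mod_cast hk) (uniqueDiffOn_Icc hab) hx
  rw [iteratedDerivWithin_eq_iteratedFDerivWithin, ← h, iteratedDeriv_eq_iteratedFDeriv]
  rfl

theorem myOpenEq {g : ℝ → ℝ} {U : Set ℝ} (hU : IsOpen U) {x : ℝ} (hx : x ∈ U) (k : ℕ) :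
    iteratedDerivWithin k g U x = iteratedDeriv k g x := by
  rw [iteratedDerivWithin_eq_iteratedFDerivWithin, iteratedFDerivWithin_of_isOpen k hU hx,
    iteratedDeriv_eq_iteratedFDeriv]

theorem myOneDimNonneg {g : ℝ → ℝ} (hg : ContDiffAt ℝ 4 g 0) (h0 : g 0 = 0)
    (h1 : iteratedDeriv 1 g 0 = 0) (h2 : iteratedDeriv 2 g 0 = 0)
    {δ : ℝ} (hδ : 0 < δ) (hpos : ∀ t : ℝ, |t| ≤ δ → 0 ≤ g t) :
    0 ≤ iteratedDeriv 3 g 0 := by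
  by_contra hneg
  push_neg at hneg
  obtain ⟨v, hv, hgv⟩ := hg.contDiffOn le_rfl (by simp)
  set U := interior v with hUdef
  have hUo : IsOpen U := isOpen_interior
  have hU0 : (0 : ℝ) ∈ U := mem_interior_iff_mem_nhds.2 hv
  have hgU : ContDiffOn ℝ 4 g U := hgv.mono interior_subset
  -- continuity of third derivative on U
  have hcont3 : ContinuousOn (iteratedDeriv 3 g) U := by
    have := (hgU.differentiableOn_iteratedDerivWithin (m := 3)
      (by norm_num) hUo.uniqueDiffOn).continuousOn (𝕜 := ℝ)
    exact this.congr fun y hy => (myOpenEq hUo hy 3).symm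
  have hcontAt : ContinuousAt (iteratedDeriv 3 g) 0 :=
    hcont3.continuousAt (hUo.mem_nhds hU0)
  -- find ε ball where third derivative is negative
  have hev : ∀ᶠ x in nhds (0 : ℝ), iteratedDeriv 3 g x < 0 :=
    hcontAt.eventually_lt continuousAt_const hneg
  obtain ⟨ε₁, hε₁, hball1⟩ := Metric.eventually_nhds_iff.1 hev
  obtain ⟨ε₂, hε₂, hball2⟩ := Metric.isOpen_iff.1 hUo 0 hU0
  set t : ℝ := min δ (min ε₁ ε₂) / 2 with htdef
  have ht : 0 < t := by positivity
  have htδ : t ≤ δ := by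
    have : min δ (min ε₁ ε₂) ≤ δ := min_le_left _ _
    simp only [htdef]; linarith
  have htε₁ : t < ε₁ := by
    have h := (min_le_right δ (min ε₁ ε₂)).trans (min_le_left ε₁ ε₂)
    simp only [htdef]; linarith
  have htε₂ : t < ε₂ := by
    have h := (min_le_right δ (min ε₁ ε₂)).trans (min_le_right ε₁ ε₂)
    simp only [htdef]; linarith
  have hsub : Icc (0 : ℝ) t ⊆ U := by
    intro x hx
    apply hball2
    rw [Metric.mem_ball, Real.dist_eq, sub_zero, abs_of_nonneg hx.1]
    exact lt_of_le_of_lt hx.2 htε₂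
  -- Taylor with Lagrange remainder, order 2
  have hfIcc : ContDiffOn ℝ 2 g (Icc 0 t) := (hgU.mono hsub).of_le (by norm_num)
  have hf' : DifferentiableOn ℝ (iteratedDerivWithin 2 g (Icc 0 t)) (Ioo 0 t) :=
    (((hgU.mono hsub).of_le (by norm_num : (3 : WithTop ℕ∞) ≤ 4)).differentiableOn_iteratedDerivWithin
      (by norm_num) (uniqueDiffOn_Icc ht)).mono Ioo_subset_Icc_self
  have hTay0 := taylor_mean_remainder_lagrange (f := g) (n := 2) ht.ne
    (by rwa [uIcc_of_le ht.le]) (by rwa [uIcc_of_le ht.le, uIoo_of_le ht.le])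
  rw [uIcc_of_le ht.le, uIoo_of_le ht.le] at hTay0
  obtain ⟨x', hx', hTay⟩ := hTay0
  -- Taylor polynomial vanishes
  have hIccEq : ∀ k : ℕ, k ≤ 4 → ∀ x ∈ Icc (0:ℝ) t,
      iteratedDerivWithin k g (Icc 0 t) x = iteratedDeriv k g x := by
    intro k hk x hx
    exact myIccEq hUo hgU ht hsub hx (by exact_mod_cast hk)
  have hT0 : taylorWithinEval g 2 (Icc 0 t) 0 t = 0 := by
    simp only [taylorWithinEval_succ, taylor_within_zero_eval]
    rw [hIccEq 1 (by norm_num) 0 (left_mem_Icc.2 ht.le),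
      hIccEq 2 (by norm_num) 0 (left_mem_Icc.2 ht.le), h0, h1, h2]
    simp
  rw [hT0, sub_zero, hIccEq 3 (by norm_num) x' (Ioo_subset_Icc_self hx')] at hTay
  -- g t < 0, contradiction
  have hx'neg : iteratedDeriv 3 g x' < 0 := by
    apply hball1
    rw [Real.dist_eq, sub_zero, abs_of_nonneg hx'.1.le]
    exact hx'.2.trans htε₁
  have hgt : g t < 0 := by
    rw [hTay]
    have h1' : (0:ℝ) < (t - 0) ^ (2+1) := pow_pos (by linarith) _
    have h6 : (0:ℝ) < ((Nat.factorial (2+1) : ℕ) : ℝ) :=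
      Nat.cast_pos.2 (Nat.factorial_pos _)
    exact div_neg_of_neg_of_pos (mul_neg_of_neg_of_pos hx'neg h1') h6
  exact absurd (hpos t (by rw [abs_of_pos ht]; exact htδ)) (not_le.2 hgt)

theorem myOneDimZero {g : ℝ → ℝ} (hg : ContDiffAt ℝ 4 g 0) (h0 : g 0 = 0)
    (h1 : iteratedDeriv 1 g 0 = 0) (h2 : iteratedDeriv 2 g 0 = 0)
    {δ : ℝ} (hδ : 0 < δ) (hpos : ∀ t : ℝ, |t| ≤ δ → 0 ≤ g t) :
    iteratedDeriv 3 g 0 = 0 := by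
  have hle : 0 ≤ iteratedDeriv 3 g 0 := myOneDimNonneg hg h0 h1 h2 hδ hpos
  set gneg : ℝ → ℝ := fun t => g (-t) with hgneg
  have hcomp : ∀ n : ℕ, iteratedDeriv n gneg 0 = (-1 : ℝ) ^ n • iteratedDeriv n g 0 := by
    intro n
    rw [hgneg, iteratedDeriv_comp_neg n g 0, neg_zero]
  have hge : 0 ≤ iteratedDeriv 3 gneg 0 := by
    apply myOneDimNonneg (δ := δ) _ (by simp [hgneg, h0]) _ _ hδ
    · intro t ht
      exact hpos (-t) (by rwa [abs_neg])
    · have : gneg = g ∘ (fun t : ℝ => -t) := rfl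
      rw [this]
      exact ContDiffAt.comp 0 (by rwa [neg_zero]) (contDiff_neg.contDiffAt)
    · rw [hcomp 1, h1, smul_zero]
    · rw [hcomp 2, h2, smul_zero]
  rw [hcomp 3] at hge
  simp only [pow_succ, pow_zero, one_mul, neg_mul, one_mul, smul_eq_mul] at hge
  nlinarith [hle, hge]

/-- fourth-order growth kills the cubic along the null space of the Hessian. -/
theorem null_space_cubic_vanishes
    {d : ℕ} (f : EuclideanSpace ℝ (Fin d) → ℝ)
    (hf : ContDiffAt ℝ 4 f 0) (hf0 : f 0 = 0) (hg0 : ∇ f 0 = 0)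
    (m₀ ρ₀ : ℝ) (hm₀ : 0 < m₀) (hρ₀ : 0 < ρ₀)
    (hgrowth : ∀ x : EuclideanSpace ℝ (Fin d), ‖x‖ ≤ ρ₀ → m₀ * ‖x‖ ^ 4 ≤ f x)
    (u : EuclideanSpace ℝ (Fin d)) (hu : fderiv ℝ (∇ f) 0 u = 0) :
    iteratedFDeriv ℝ 3 f 0 ![u, u, u] = 0 := by
  by_cases hu0 : u = 0
  · subst hu0
    exact (iteratedFDeriv ℝ 3 f 0).map_coord_zero 0 (by simp)
  set L : ℝ →L[ℝ] EuclideanSpace ℝ (Fin d) := ContinuousLinearMap.toSpanSingleton ℝ u with hLdef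
  have hL : ∀ t : ℝ, L t = t • u := fun t => rfl
  have hL0 : L 0 = 0 := by rw [hL]; simp
  set g : ℝ → ℝ := f ∘ L with hgdef
  -- ContDiffAt of g
  have hg : ContDiffAt ℝ 4 g 0 := by
    apply ContDiffAt.comp
    · rwa [hL0]
    · exact L.contDiff.contDiffAt
  have hgzero : g 0 = 0 := by
    simp only [hgdef, Function.comp_apply, hL0, hf0]
  -- the composition formula for iterated derivatives
  obtain ⟨v, hv, hfv⟩ := hf.contDiffOn le_rfl (by simp)
  have hVo : IsOpen (interior v) := isOpen_interior
  have hV0 : (0 : EuclideanSpace ℝ (Fin d)) ∈ interior v := mem_interior_iff_mem_nhds.2 hv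
  have hfV : ContDiffOn ℝ 4 f (interior v) := hfv.mono interior_subset
  have hcomp : ∀ k : ℕ, (k : WithTop ℕ∞) ≤ 4 →
      iteratedDeriv k g 0 = iteratedFDeriv ℝ k f 0 (fun _ => u) := by
    intro k hk
    have hWo : IsOpen (L ⁻¹' interior v) := hVo.preimage L.continuous
    have hW0 : (0 : ℝ) ∈ L ⁻¹' interior v := by
      simp only [mem_preimage, hL0]; exact hV0
    have hfc : iteratedFDeriv ℝ k g 0 =
        (iteratedFDeriv ℝ k f 0).compContinuousLinearMap (fun _ => L) := by
      rw [← iteratedFDerivWithin_of_isOpen k hWo hW0,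
          ← iteratedFDerivWithin_of_isOpen k hVo hV0]
      have := L.iteratedFDerivWithin_comp_right (x := 0) hfV hVo.uniqueDiffOn
        hWo.uniqueDiffOn (by rwa [hL0]) hk
      rw [this, hL0]
    rw [iteratedDeriv_eq_iteratedFDeriv, hfc,
      ContinuousMultilinearMap.compContinuousLinearMap_apply]
    congr 1
    funext i
    rw [hL]; simp
  -- first derivative of f vanishes
  have hfd0 : fderiv ℝ f 0 = 0 := by
    have h := hg0
    rw [gradient] at h
    exact (LinearIsometryEquiv.map_eq_zero_iff _).1 h
  have h1 : iteratedDeriv 1 g 0 = 0 := by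
    rw [hcomp 1 (by norm_num), iteratedFDeriv_one_apply, hfd0]
    rfl
  -- second derivative along u vanishes
  have hsec : fderiv ℝ (fderiv ℝ f) 0 u = 0 := by
    have hgrad : (∇ f) = ((toDual ℝ (EuclideanSpace ℝ (Fin d))).symm : (EuclideanSpace ℝ (Fin d) →L[ℝ] ℝ) → EuclideanSpace ℝ (Fin d)) ∘ (fderiv ℝ f) := rfl
    rw [hgrad, LinearIsometryEquiv.comp_fderiv] at hu
    simp only [ContinuousLinearMap.coe_comp', Function.comp_apply] at hu
    exact (ContinuousLinearEquiv.map_eq_zero_iff _).1 hu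
  have h2 : iteratedDeriv 2 g 0 = 0 := by
    rw [hcomp 2 (by norm_num), iteratedFDeriv_two_apply]
    simp only [hsec]
    rfl
  -- positivity of g near 0
  have hnorm : 0 < ‖u‖ := norm_pos_iff.2 hu0
  have hδ : 0 < ρ₀ / ‖u‖ := div_pos hρ₀ hnorm
  have hpos : ∀ t : ℝ, |t| ≤ ρ₀ / ‖u‖ → 0 ≤ g t := by
    intro t ht
    have hn : ‖t • u‖ ≤ ρ₀ := by
      rw [norm_smul, Real.norm_eq_abs]
      calc |t| * ‖u‖ ≤ (ρ₀ / ‖u‖) * ‖u‖ := by gcongr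
        _ = ρ₀ := div_mul_cancel₀ _ hnorm.ne'
    have := hgrowth (t • u) hn
    have h0' : 0 ≤ m₀ * ‖t • u‖ ^ 4 := by positivity
    calc (0:ℝ) ≤ m₀ * ‖t • u‖ ^ 4 := h0'
      _ ≤ f (t • u) := this
      _ = g t := by rw [hgdef]; simp only [Function.comp_apply, hL]
  -- conclude
  have h3 := myOneDimZero hg hgzero h1 h2 hδ hpos
  rw [hcomp 3 (by norm_num)] at h3
  have : ![u, u, u] = (fun _ : Fin 3 => u) := by
    funext i
    fin_cases i <;> rfl
  rw [this]
  exact h3
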